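/- Fix k ≥ 2 and B > 0, and define F_k : ℝ^k → (0,1] by F_k(x) = exp(x₁)/Σ_{l=1}^{k} exp(x_l). Then for every x ∈ [−B,B]^k, the Hessian of −log F_k at x annihilates the all-ones vector, i.e. ∇²(−log F_k(x))·1 = 0, and satisfies the matrix inequality ∇²(−log F_k(x)) ⪰ (1/(k·exp(2B)))·(I − (1/k)·11ᵀ) in the positive semidefinite order. -/

import Mathlib

open scoped Classical
open Matrix

noncomputable section

/-- `F_k(x) = exp(x₁)/Σ_l exp(x_l)` (junk value `0` in the degenerate case `k = 0`). -/
def Fk {k : ℕ} (x : Fin k → ℝ) : ℝ :=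
  if h : 0 < k then Real.exp (x ⟨0, h⟩) / ∑ l, Real.exp (x l) else 0

/-- The Hessian matrix of a function of `k` real variables, via the second
iterated Fréchet derivative evaluated at pairs of coordinate directions. -/
def hessian {k : ℕ} (f : (Fin k → ℝ) → ℝ) (x : Fin k → ℝ) :
    Matrix (Fin k) (Fin k) ℝ :=
  Matrix.of fun i j => iteratedFDeriv ℝ 2 f x ![Pi.single i 1, Pi.single j 1]

variable {k : ℕ}

lemma Spos (hk : 0 < k) (y : Fin k → ℝ) : 0 < ∑ l, Real.exp (y l) := by
  have : Nonempty (Fin k) := ⟨⟨0, hk⟩⟩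
  exact Finset.sum_pos (fun l _ => Real.exp_pos _) Finset.univ_nonempty

lemma hasFDerivAt_S (y : Fin k → ℝ) :
    HasFDerivAt (fun z : Fin k → ℝ => ∑ l, Real.exp (z l))
      (∑ l, Real.exp (y l) • ContinuousLinearMap.proj (R := ℝ) (φ := fun _ : Fin k => ℝ) l) y := by
  exact HasFDerivAt.fun_sum fun l _ =>
    (ContinuousLinearMap.proj (R := ℝ) (φ := fun _ : Fin k => ℝ) l).hasFDerivAt.exp

lemma S_apply_single (y : Fin k → ℝ) (j : Fin k) :
    (∑ l, Real.exp (y l) • ContinuousLinearMap.proj (R := ℝ) (φ := fun _ : Fin k => ℝ) l)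
      (Pi.single j 1) = Real.exp (y j) := by
  simp only [ContinuousLinearMap.coe_sum', Finset.sum_apply, ContinuousLinearMap.smul_apply,
    ContinuousLinearMap.proj_apply, smul_eq_mul]
  rw [Finset.sum_eq_single j]
  · simp
  · intro l _ hl; simp [Pi.single_eq_of_ne hl]
  · simp

lemma hasFDerivAt_g (hk : 0 < k) (y : Fin k → ℝ) :
    HasFDerivAt (fun z : Fin k → ℝ => Real.log (∑ l, Real.exp (z l)) - z ⟨0, hk⟩)
      ((∑ l, Real.exp (y l))⁻¹ •
          (∑ l, Real.exp (y l) • ContinuousLinearMap.proj (R := ℝ) (φ := fun _ : Fin k => ℝ) l)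
        - ContinuousLinearMap.proj (R := ℝ) (φ := fun _ : Fin k => ℝ) ⟨0, hk⟩) y := by
  exact ((Real.hasDerivAt_log (Spos hk y).ne').comp_hasFDerivAt y (hasFDerivAt_S y)).sub
    (ContinuousLinearMap.proj (R := ℝ) (φ := fun _ : Fin k => ℝ) ⟨0, hk⟩).hasFDerivAt

lemma fderiv_g_apply (hk : 0 < k) (y : Fin k → ℝ) (j : Fin k) :
    fderiv ℝ (fun z : Fin k → ℝ => Real.log (∑ l, Real.exp (z l)) - z ⟨0, hk⟩) y
      (Pi.single j 1) =
      Real.exp (y j) / (∑ l, Real.exp (y l)) - (Pi.single j 1 : Fin k → ℝ) ⟨0, hk⟩ := by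
  rw [(hasFDerivAt_g hk y).fderiv]
  simp only [ContinuousLinearMap.sub_apply, ContinuousLinearMap.smul_apply,
    ContinuousLinearMap.proj_apply, S_apply_single, smul_eq_mul]
  rw [div_eq_inv_mul]

lemma contDiff_g (hk : 0 < k) :
    ContDiff ℝ ⊤ (fun z : Fin k → ℝ => Real.log (∑ l, Real.exp (z l)) - z ⟨0, hk⟩) := by
  have hS : ContDiff ℝ ⊤ (fun z : Fin k → ℝ => ∑ l, Real.exp (z l)) :=
    ContDiff.sum fun l _ => Real.contDiff_exp.comp
      (ContinuousLinearMap.proj (R := ℝ) (φ := fun _ : Fin k => ℝ) l).contDiff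
  exact (hS.log fun z => (Spos hk z).ne').sub
    (ContinuousLinearMap.proj (R := ℝ) (φ := fun _ : Fin k => ℝ) ⟨0, hk⟩).contDiff

set_option maxHeartbeats 1000000 in
lemma hessian_g_entry (hk : 0 < k) (x : Fin k → ℝ) (i j : Fin k) :
    hessian (fun z : Fin k → ℝ => Real.log (∑ l, Real.exp (z l)) - z ⟨0, hk⟩) x i j =
      Real.exp (x j) / (∑ l, Real.exp (x l)) * (if i = j then 1 else 0) -
        Real.exp (x i) / (∑ l, Real.exp (x l)) *
          (Real.exp (x j) / (∑ l, Real.exp (x l))) := by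
  set g := fun z : Fin k → ℝ => Real.log (∑ l, Real.exp (z l)) - z ⟨0, hk⟩ with hg
  have hdiff : DifferentiableAt ℝ (fderiv ℝ g) x := by
    have h2 : ContDiffAt ℝ 2 g x := (contDiff_g hk).contDiffAt.of_le le_top
    have := h2.fderiv_right (m := 1) (by norm_num)
    exact this.differentiableAt one_ne_zero
  have key : hessian g x i j = fderiv ℝ (fun y => fderiv ℝ g y (Pi.single j 1)) x (Pi.single i 1) := by
    rw [hessian, Matrix.of_apply, iteratedFDeriv_two_apply]
    rw [fderiv_clm_apply hdiff (differentiableAt_const _)]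
    simp
  rw [key]
  -- the function y ↦ fderiv g y (single j 1) is y ↦ exp (y j)/S y - const
  have hfun : (fun y => fderiv ℝ g y (Pi.single j 1)) =
      fun y => Real.exp (y j) / (∑ l, Real.exp (y l)) - (Pi.single j 1 : Fin k → ℝ) ⟨0, hk⟩ := by
    funext y; exact fderiv_g_apply hk y j
  rw [hfun]
  have hc : HasFDerivAt (fun y : Fin k → ℝ => Real.exp (y j))
      (Real.exp (x j) • ContinuousLinearMap.proj (R := ℝ) (φ := fun _ : Fin k => ℝ) j) x :=
    (ContinuousLinearMap.proj (R := ℝ) (φ := fun _ : Fin k => ℝ) j).hasFDerivAt.exp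
  have hinv : HasFDerivAt (fun y : Fin k → ℝ => (∑ l, Real.exp (y l))⁻¹)
      ((-((∑ l, Real.exp (x l)) ^ 2)⁻¹) •
        (∑ l, Real.exp (x l) • ContinuousLinearMap.proj (R := ℝ) (φ := fun _ : Fin k => ℝ) l)) x :=
    (hasDerivAt_inv (Spos hk x).ne').comp_hasFDerivAt x (hasFDerivAt_S x)
  have hmul := hc.fun_mul hinv
  simp only [div_eq_mul_inv]
  have hq := (hmul.sub_const ((Pi.single j 1 : Fin k → ℝ) ⟨0, hk⟩)).fderiv
  rw [hq]
  simp only [ContinuousLinearMap.add_apply, ContinuousLinearMap.smul_apply,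
    ContinuousLinearMap.sub_apply, ContinuousLinearMap.proj_apply, S_apply_single,
    smul_eq_mul, neg_mul, mul_neg]
  have hS0 := (Spos hk x).ne'
  have hsingle : (Pi.single i 1 : Fin k → ℝ) j = (if i = j then (1:ℝ) else 0) := by
    rcases eq_or_ne i j with h | h
    · subst h; simp
    · simp [Pi.single_eq_of_ne (Ne.symm h), h]
  rw [hsingle]
  field_simp
  ring_nf

lemma neg_log_Fk_eq (hk : 0 < k) :
    (fun y : Fin k → ℝ => -Real.log (Fk y)) =
      fun z : Fin k → ℝ => Real.log (∑ l, Real.exp (z l)) - z ⟨0, hk⟩ := by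
  funext y
  rw [Fk, dif_pos hk, Real.log_div (Real.exp_ne_zero _) (Spos hk y).ne', Real.log_exp]
  ring

lemma hessian_entry (hk : 0 < k) (x : Fin k → ℝ) (i j : Fin k) :
    hessian (fun y => -Real.log (Fk y)) x i j =
      Real.exp (x j) / (∑ l, Real.exp (x l)) * (if i = j then 1 else 0) -
        Real.exp (x i) / (∑ l, Real.exp (x l)) *
          (Real.exp (x j) / (∑ l, Real.exp (x l))) := by
  rw [neg_log_Fk_eq hk]
  exact hessian_g_entry hk x i j

/-- for `k ≥ 2`, `B > 0` and `x ∈ [−B,B]^k`, the Hessian of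
`−log F_k` at `x` annihilates the all-ones vector and dominates
`(1/(k·exp(2B)))·(I − (1/k)·11ᵀ)` in the positive semidefinite order. -/
theorem neg_log_Fk_hessian_bounds
    (k : ℕ) (B : ℝ) (hk : 2 ≤ k) (hB : 0 < B)
    (x : Fin k → ℝ) (hx : ∀ i, |x i| ≤ B) :
    (hessian (fun y => -Real.log (Fk y)) x).mulVec (fun _ => (1 : ℝ)) = 0 ∧
      (hessian (fun y => -Real.log (Fk y)) x -
          Matrix.of fun i j : Fin k =>
            1 / ((k : ℝ) * Real.exp (2 * B)) *
              ((if i = j then (1 : ℝ) else 0) - 1 / (k : ℝ))).PosSemidef := by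
  have hk0 : 0 < k := lt_of_lt_of_le (by norm_num) hk
  have hk0' : (0:ℝ) < k := by exact_mod_cast hk0
  set S : ℝ := ∑ l, Real.exp (x l) with hSdef
  have hS0 : 0 < S := Spos hk0 x
  set p : Fin k → ℝ := fun i => Real.exp (x i) / S with hpdef
  set H := hessian (fun y => -Real.log (Fk y)) x with hHdef
  have hH : ∀ i j, H i j = p j * (if i = j then 1 else 0) - p i * p j := by
    intro i j
    rw [hHdef, hessian_entry hk0 x i j]
  have hsum : ∑ i, p i = 1 := by
    simp only [hpdef]
    rw [← Finset.sum_div, ← hSdef, div_self hS0.ne']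
  set c : ℝ := 1 / ((k : ℝ) * Real.exp (2 * B)) with hcdef
  have hc0 : 0 ≤ c := by positivity
  have hpc : ∀ i, c ≤ p i := by
    intro i
    have hE1 : Real.exp (-B) ≤ Real.exp (x i) :=
      Real.exp_le_exp.mpr (neg_le_of_abs_le (hx i))
    have hE2 : Real.exp (-B) * Real.exp (2*B) = Real.exp B := by
      rw [← Real.exp_add]; ring_nf
    have hSle : S ≤ (k : ℝ) * Real.exp B := by
      rw [hSdef]
      calc ∑ l, Real.exp (x l) ≤ ∑ _l : Fin k, Real.exp B :=
            Finset.sum_le_sum fun l _ =>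
              Real.exp_le_exp.mpr (le_of_abs_le (hx l))
        _ = (k : ℝ) * Real.exp B := by
            simp [Finset.sum_const, Finset.card_univ, nsmul_eq_mul]
    rw [hcdef, hpdef]
    rw [div_le_div_iff₀ (by positivity) hS0]
    have := mul_le_mul_of_nonneg_right hE1
      (le_of_lt (by positivity : (0:ℝ) < (k:ℝ) * Real.exp (2*B)))
    nlinarith [Real.exp_pos (2*B), Real.exp_pos B, Real.exp_pos (-B)]
  constructor
  · -- mulVec 1 = 0
    funext i
    simp only [mulVec, dotProduct, mul_one, Pi.zero_apply]
    rw [Finset.sum_congr rfl fun j _ => hH i j]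
    rw [Finset.sum_sub_distrib, ← Finset.mul_sum, hsum]
    have : ∑ j, p j * (if i = j then 1 else 0) = p i := by
      simp only [mul_ite, mul_one, mul_zero]
      rw [Finset.sum_ite_eq]
      simp
    rw [this]; ring
  · rw [Matrix.posSemidef_iff_dotProduct_mulVec]
    refine ⟨?_, ?_⟩
    · -- Hermitian
      ext i j
      simp only [Matrix.conjTranspose_apply, Matrix.sub_apply, Matrix.of_apply, star_trivial,
        hH]
      rcases eq_or_ne i j with h | h
      · subst h; ring
      · simp only [h, Ne.symm h, if_false]; ring
    · intro v
      have hQ : ∀ i, (∑ j, ((H - Matrix.of fun i j : Fin k =>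
            c * ((if i = j then (1:ℝ) else 0) - 1 / (k:ℝ))) i j) * v j) =
          p i * v i - p i * (∑ j, p j * v j) - c * v i + c / k * (∑ j, v j) := by
        intro i
        have hterm : ∀ j, ((H - Matrix.of fun i j : Fin k =>
              c * ((if i = j then (1:ℝ) else 0) - 1 / (k:ℝ))) i j) * v j =
            (if i = j then p j * v j else 0) - p i * (p j * v j)
              - c * (if i = j then v j else 0) + c / k * v j := by
          intro j
          rw [Matrix.sub_apply, Matrix.of_apply, hH]
          rcases eq_or_ne i j with h | h
          · subst h; simp only [if_pos rfl, ↓reduceIte]; field_simp; ring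
          · simp only [if_neg h]; field_simp; ring
        rw [Finset.sum_congr rfl fun j _ => hterm j]
        rw [Finset.sum_add_distrib, Finset.sum_sub_distrib, Finset.sum_sub_distrib,
          ← Finset.mul_sum, ← Finset.mul_sum]
        rw [Finset.sum_ite_eq, Finset.sum_ite_eq, ← Finset.mul_sum]
        simp
      set μ : ℝ := ∑ j, p j * v j with hμ
      set T : ℝ := ∑ j, v j with hT
      have hform : star v ⬝ᵥ (H - Matrix.of fun i j : Fin k =>
            c * ((if i = j then (1:ℝ) else 0) - 1 / (k:ℝ))).mulVec v =
          (∑ i, p i * v i ^ 2) - μ ^ 2 - c * (∑ i, v i ^ 2) + c / k * T ^ 2 := by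
        simp only [dotProduct, mulVec, star_trivial, Pi.star_apply]
        rw [Finset.sum_congr rfl fun i _ => by rw [show (∑ j, ((H - Matrix.of fun i j : Fin k =>
            c * ((if i = j then (1:ℝ) else 0) - 1 / (k:ℝ))) i j) * v j) =
            p i * v i - p i * μ - c * v i + c / k * T from hQ i]]
        have : ∀ i, v i * (p i * v i - p i * μ - c * v i + c / k * T) =
            p i * v i ^ 2 - μ * (p i * v i) - c * v i ^ 2 + (c / k * T) * v i := by
          intro i; ring
        rw [Finset.sum_congr rfl fun i _ => this i]
        rw [Finset.sum_add_distrib, Finset.sum_sub_distrib, Finset.sum_sub_distrib,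
          ← Finset.mul_sum, ← Finset.mul_sum, ← Finset.mul_sum, ← hμ, ← hT]
        ring
      rw [hform]
      -- key inequality
      have hA : (∑ i, p i * (v i - μ) ^ 2) = (∑ i, p i * v i ^ 2) - μ ^ 2 := by
        have : ∀ i, p i * (v i - μ) ^ 2 =
            p i * v i ^ 2 - 2 * μ * (p i * v i) + μ ^ 2 * p i := fun i => by ring
        rw [Finset.sum_congr rfl fun i _ => this i]
        rw [Finset.sum_add_distrib, Finset.sum_sub_distrib,
          ← Finset.mul_sum, ← Finset.mul_sum, ← hμ, hsum]
        ring
      have hC : (∑ i, (v i - μ) ^ 2) = (∑ i, v i ^ 2) - 2 * μ * T + k * μ ^ 2 := by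
        have : ∀ i, (v i - μ) ^ 2 = v i ^ 2 - 2 * μ * v i + μ ^ 2 := fun i => by ring
        rw [Finset.sum_congr rfl fun i _ => this i]
        rw [Finset.sum_add_distrib, Finset.sum_sub_distrib, ← Finset.mul_sum, ← hT]
        simp [Finset.sum_const, Finset.card_univ, nsmul_eq_mul]
      have hAC : c * (∑ i, (v i - μ) ^ 2) ≤ ∑ i, p i * (v i - μ) ^ 2 := by
        rw [Finset.mul_sum]
        exact Finset.sum_le_sum fun i _ =>
          mul_le_mul_of_nonneg_right (hpc i) (sq_nonneg _)
      have hApos : 0 ≤ ∑ i, p i * (v i - μ) ^ 2 :=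
        Finset.sum_nonneg fun i _ => mul_nonneg (le_trans hc0 (hpc i)) (sq_nonneg _)
      have hCb : (∑ i, v i ^ 2) - T ^ 2 / k ≤ ∑ i, (v i - μ) ^ 2 := by
        rw [hC]
        have hd : (∑ i, v i ^ 2) - 2 * μ * T + k * μ ^ 2 -
            ((∑ i, v i ^ 2) - T ^ 2 / (k:ℝ)) = ((k:ℝ) * μ - T) ^ 2 / k := by
          field_simp; ring
        linarith [div_nonneg (sq_nonneg ((k:ℝ) * μ - T)) hk0'.le, hd]
      have h1 : c * ((∑ i, v i ^ 2) - T ^ 2 / k) ≤ ∑ i, p i * (v i - μ) ^ 2 :=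
        le_trans (mul_le_mul_of_nonneg_left hCb hc0) hAC
      have h4 : c * ((∑ i, v i ^ 2) - T ^ 2 / (k:ℝ)) =
          c * (∑ i, v i ^ 2) - c / k * T ^ 2 := by ring
      linarith [h1, hA, h4]

end
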